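/- arXiv:1612.05090 — 2 statements merged into one kernel-verified Lean document; each statement's English description precedes it below -/
import Mathlib

section
/- Let $a^1 \leq \cdots \leq a^m$ and $b^1 \leq \cdots \leq b^d$ be integers with $m \geq d$, and suppose the greedy swapping procedure pairs each $b^j$ with some $a^i \leq b^j$ (no cycles occur). Let $M$ be the order-preserving rematching of the bottom row with the set of paired top-row entries. If $a^h$ is a hole (an unpaired top-row entry), then after replacing each paired top-row entry $a^{i_j}$ by $b^j$ via $M$ and re-sorting the top row into increasing order, the entry in position $h$ of the sorted top row equals $a^h$. Equivalently: for every hole $a^h$, all bottom-row entries $b^j$ with $M(b^j)$ lying strictly left of position $h$ satisfy $b^j \leq a^h$, and all $b^j$ with $M(b^j)$ strictly right of position $h$ satisfy $b^j \geq a^h$. -/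
/-! Common framework: two-row tableaux as pairs of (weakly increasing) lists of
integers, the greedy swapping procedure, the order-preserving rematching,
wall-crossing, and the charge-shift `Δ_e`.  Positions are 1-based. -/

/-- The entry of a list at 1-based position `i` (default `0` out of range). -/
def ent (L : List ℤ) (i : ℕ) : ℤ := L.getD (i - 1) 0

/-- Greedy pick: the top-row position chosen for a bottom entry of value `x`,
given the set `used` of already used top positions: the maximal unused position
whose entry is `≤ x` if one exists, otherwise the maximal unused position
(a "cycle"). -/
def pickPos (A : List ℤ) (used : Finset ℕ) (x : ℤ) : ℕ :=
  let avail := (Finset.Icc 1 A.length) \ used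
  let cand := avail.filter (fun i => ent A i ≤ x)
  if cand.Nonempty then WithBot.unbotD 0 cand.max else WithBot.unbotD 0 avail.max

/-- The set of used top-row positions after the first `j` steps of the greedy
swapping procedure (bottom entries processed in increasing order). -/
def usedPos (A B : List ℤ) : ℕ → Finset ℕ
  | 0 => ∅
  | j + 1 => insert (pickPos A (usedPos A B j) (ent B (j + 1))) (usedPos A B j)

/-- `Spos A B j` is the top-row position greedily matched with bottom position `j`. -/
def Spos (A B : List ℤ) (j : ℕ) : ℕ := pickPos A (usedPos A B (j - 1)) (ent B j)

/-- No cycles occur: every bottom entry is matched with a top entry not exceeding it. -/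
def NoCycles (A B : List ℤ) : Prop :=
  ∀ j, 1 ≤ j → j ≤ B.length → ent A (Spos A B j) ≤ ent B j

/-- The set of all matched (paired) top-row positions. -/
def matchedPos (A B : List ℤ) : Finset ℕ := usedPos A B B.length

/-- The order-preserving rematching: `Mpos A B j` is the `j`-th smallest matched
top-row position, so `M(b^j) = a^{Mpos A B j}`. -/
def Mpos (A B : List ℤ) (j : ℕ) : ℕ :=
  ((matchedPos A B).sort (· ≤ ·)).getD (j - 1) 0

/-- A top-row position is a hole if it is in range and never matched. -/
def IsHole (A B : List ℤ) (i : ℕ) : Prop :=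
  i ∈ Finset.Icc 1 A.length ∧ i ∉ matchedPos A B

/-- The top row after replacing each matched entry `M(b^j) = a^{i_j}` by `b^j`
(before re-sorting). -/
def swappedTop (A B : List ℤ) : List ℤ :=
  (List.range A.length).map (fun (t : ℕ) =>
    if (t + 1) ∈ matchedPos A B then
      ent B ((((matchedPos A B).sort (· ≤ ·)).idxOf (t + 1)) + 1)
    else ent A (t + 1))

/-- The top row after wall-crossing: swapped and re-sorted into increasing order. -/
def wcTop (A B : List ℤ) : List ℤ := List.insertionSort (· ≤ ·) (swappedTop A B)

/-- The bottom row after wall-crossing: `j`-th entry is `a^{Mpos A B j}`. -/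
def wcBot (A B : List ℤ) : List ℤ :=
  (List.range B.length).map (fun (t : ℕ) => ent A (Mpos A B (t + 1)))

/-- The charge shift `Δ_e` on the top row: prepend the `e` consecutive integers
starting at the smallest bottom entry, and add `e` to every old top entry. -/
def deltaTop (e : ℕ) (A B : List ℤ) : List ℤ :=
  (List.range e).map (fun i => ent B 1 + (i : ℤ)) ++ A.map (· + (e : ℤ))

/-- Top row of the two-row tableau of the charged symmetric bipartition
`|(λ,λ), (0, e/2)⟩`, where `d ≥ e/2` satisfies `λ_{d+1-e/2} = λ_{d+1} = 0`. -/
def topInit (p : ℕ → ℕ) (e d : ℕ) : List ℤ :=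
  (List.range (d + 1)).map (fun (t : ℕ) =>
    ((e / 2 : ℕ) : ℤ) - (d : ℤ) + (t : ℤ) + (Int.ofNat (p (d + 1 - t))))

/-- Bottom row of the two-row tableau of `|(λ,λ), (0, e/2)⟩`. -/
def botInit (p : ℕ → ℕ) (e d : ℕ) : List ℤ :=
  (List.range (d + 1 - e / 2)).map (fun (t : ℕ) =>
    ((e / 2 : ℕ) : ℤ) - (d : ℤ) + (t : ℤ) + (Int.ofNat (p (d + 1 - e / 2 - t))))

/-- The iterated sequence of two-row tableaux: `tab p e d 0` is the tableau of
`|(λ,λ),(0,e/2)⟩` and `tab p e d (k+1) = Δ_e (wc (tab p e d k))`. -/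
def tab (p : ℕ → ℕ) (e d : ℕ) : ℕ → List ℤ × List ℤ
  | 0 => (topInit p e d, botInit p e d)
  | k + 1 =>
    (deltaTop e (wcTop (tab p e d k).1 (tab p e d k).2) (wcBot (tab p e d k).1 (tab p e d k).2),
      wcBot (tab p e d k).1 (tab p e d k).2)

lemma ent_mono {L : List ℤ} (hL : List.Pairwise (· ≤ ·) L) {i j : ℕ}
    (h1 : 1 ≤ i) (h2 : i ≤ j) (h3 : j ≤ L.length) : ent L i ≤ ent L j := by
  have hi : i - 1 < L.length := by omega
  have hj : j - 1 < L.length := by omega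
  rw [ent, ent, List.getD_eq_getElem _ _ hi, List.getD_eq_getElem _ _ hj]
  exact hL.rel_get_of_le (a := ⟨i-1, hi⟩) (b := ⟨j-1, hj⟩) (by simp; omega)

lemma usedPos_card_le (A B : List ℤ) : ∀ j, (usedPos A B j).card ≤ j
  | 0 => by simp [usedPos]
  | j+1 => by
    rw [usedPos]
    exact le_trans (Finset.card_insert_le _ _) (Nat.succ_le_succ (usedPos_card_le A B j))

lemma usedPos_mono (A B : List ℤ) {j : ℕ} : ∀ {k}, j ≤ k → usedPos A B j ⊆ usedPos A B k := by
  intro k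
  induction k with
  | zero => intro h; rw [Nat.le_zero.mp h]
  | succ k ih =>
    intro h
    rcases Nat.lt_or_ge j (k+1) with h' | h'
    · exact (ih (by omega)).trans (by rw [usedPos]; exact Finset.subset_insert _ _)
    · rw [Nat.le_antisymm h h']

lemma usedPos_succ (A B : List ℤ) (j : ℕ) :
    usedPos A B (j+1) = insert (Spos A B (j+1)) (usedPos A B j) := rfl

lemma max_unbot'_eq {s : Finset ℕ} (hs : s.Nonempty) : WithBot.unbotD 0 s.max = s.max' hs := by
  rw [← Finset.coe_max' hs]; rfl

lemma spos_spec (A B : List ℤ) (hlen : B.length ≤ A.length) (hnc : NoCycles A B)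
    {j : ℕ} (h1 : 1 ≤ j) (h2 : j ≤ B.length) :
    (Spos A B j ∈ Finset.Icc 1 A.length ∧ Spos A B j ∉ usedPos A B (j-1)) ∧
    ∀ i ∈ Finset.Icc 1 A.length, i ∉ usedPos A B (j-1) → ent A i ≤ ent B j →
      i ≤ Spos A B j := by
  set used := usedPos A B (j-1) with husd
  set avail := Finset.Icc 1 A.length \ used with hav
  set cand := avail.filter (fun i => ent A i ≤ ent B j) with hcand
  have havail : avail.Nonempty := by
    have h3 : used.card ≤ j - 1 := usedPos_card_le A B (j-1)
    have h4 : (Finset.Icc 1 A.length).card = A.length := by simp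
    have h5 := Finset.le_card_sdiff used (Finset.Icc 1 A.length)
    rw [← hav] at h5
    exact Finset.card_pos.mp (by omega)
  have hspos : Spos A B j = if cand.Nonempty then WithBot.unbotD 0 cand.max
      else WithBot.unbotD 0 avail.max := rfl
  have hcand_ne : cand.Nonempty := by
    by_contra hc
    have hmem : avail.max' havail ∈ avail := avail.max'_mem havail
    have : avail.max' havail ∈ cand := by
      rw [hcand, Finset.mem_filter]
      refine ⟨hmem, ?_⟩
      have h6 := hnc j h1 h2
      rwa [hspos, if_neg hc, max_unbot'_eq havail] at h6
    exact hc ⟨_, this⟩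
  rw [hspos, if_pos hcand_ne, max_unbot'_eq hcand_ne]
  have hmem := cand.max'_mem hcand_ne
  have hmem1 := Finset.mem_filter.mp hmem
  have hmem2 := Finset.mem_sdiff.mp hmem1.1
  refine ⟨⟨hmem2.1, hmem2.2⟩, ?_⟩
  intro i hi hiu hile
  exact Finset.le_max' _ i
    (by rw [hcand, Finset.mem_filter, hav, Finset.mem_sdiff]; exact ⟨⟨hi, hiu⟩, hile⟩)

lemma mem_usedPos (A B : List ℤ) :
    ∀ k i, i ∈ usedPos A B k ↔ ∃ j, 1 ≤ j ∧ j ≤ k ∧ Spos A B j = i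
  | 0, i => by simp [usedPos]
  | k+1, i => by
    rw [usedPos_succ, Finset.mem_insert, mem_usedPos A B k]
    constructor
    · rintro (h | ⟨j, hj1, hj2, hj3⟩)
      · exact ⟨k+1, by omega, le_refl _, h.symm⟩
      · exact ⟨j, hj1, by omega, hj3⟩
    · rintro ⟨j, hj1, hj2, hj3⟩
      rcases eq_or_lt_of_le hj2 with h | h
      · left; rw [← hj3, h]
      · right; exact ⟨j, hj1, by omega, hj3⟩

lemma spos_mem_usedPos (A B : List ℤ) {j : ℕ} (h1 : 1 ≤ j) :
    Spos A B j ∈ usedPos A B j := (mem_usedPos A B j _).mpr ⟨j, h1, le_rfl, rfl⟩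

lemma spos_inj (A B : List ℤ) (hlen : B.length ≤ A.length) (hnc : NoCycles A B)
    {j j' : ℕ} (h1 : 1 ≤ j') (h2 : j' < j) (h3 : j ≤ B.length) :
    Spos A B j ≠ Spos A B j' := by
  have hfresh := (spos_spec A B hlen hnc (by omega : 1 ≤ j) h3).1.2
  have hmem : Spos A B j' ∈ usedPos A B (j-1) :=
    (mem_usedPos A B (j-1) _).mpr ⟨j', h1, by omega, rfl⟩
  intro h; rw [h] at hfresh; exact hfresh hmem

lemma usedPos_card (A B : List ℤ) (hlen : B.length ≤ A.length) (hnc : NoCycles A B) :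
    ∀ j, j ≤ B.length → (usedPos A B j).card = j
  | 0, _ => by simp [usedPos]
  | j+1, hj => by
    rw [usedPos_succ, Finset.card_insert_of_notMem
      (by have := (spos_spec A B hlen hnc (by omega : 1 ≤ j+1) hj).1.2
          simpa using this),
      usedPos_card A B hlen hnc j (by omega)]

lemma matched_card (A B : List ℤ) (hlen : B.length ≤ A.length) (hnc : NoCycles A B) :
    (matchedPos A B).card = B.length := usedPos_card A B hlen hnc B.length le_rfl

lemma dichotomy (A B : List ℤ) (hA : List.Pairwise (· ≤ ·) A)
    (hlen : B.length ≤ A.length) (hnc : NoCycles A B) {h : ℕ} (hh : IsHole A B h)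
    {j : ℕ} (h1 : 1 ≤ j) (h2 : j ≤ B.length) :
    (ent B j < ent A h ∧ Spos A B j < h) ∨ (ent A h ≤ ent B j ∧ h < Spos A B j) := by
  obtain ⟨hhm, hhn⟩ := hh
  have hspec := spos_spec A B hlen hnc h1 h2
  have hsm := Finset.mem_Icc.mp hspec.1.1
  have hhm' := Finset.mem_Icc.mp hhm
  have hnu : h ∉ usedPos A B (j-1) := fun hc =>
    hhn (usedPos_mono A B (by omega) hc)
  rcases le_or_gt (ent A h) (ent B j) with hle | hlt
  · right
    refine ⟨hle, ?_⟩
    have hle2 : h ≤ Spos A B j := hspec.2 h hhm hnu hle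
    have hne : h ≠ Spos A B j := by
      intro he
      exact hhn (he ▸ usedPos_mono A B h2 (spos_mem_usedPos A B h1))
    omega
  · left
    refine ⟨hlt, ?_⟩
    by_contra hc
    push_neg at hc
    have hm := ent_mono hA (by omega : 1 ≤ h) hc hsm.2
    have := hnc j h1 h2
    omega

lemma sorted_get_lt : ∀ {S : List ℕ}, S.Pairwise (· < ·) → ∀ (h k : ℕ) (hk : k < S.length),
    (S.get ⟨k, hk⟩ < h ↔ k < (S.filter (fun x => x < h)).length)
  | [], _, h, k, hk => by simp at hk
  | x :: rest, hS, h, k, hk => by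
    rw [List.pairwise_cons] at hS
    by_cases hx : x < h
    · rw [List.filter_cons_of_pos (by simpa using hx)]
      cases k with
      | zero => simpa using hx
      | succ k =>
        have ih := sorted_get_lt hS.2 h k (by simpa using hk)
        simpa [Nat.succ_lt_succ_iff] using ih
    · rw [List.filter_cons_of_neg (by simpa using hx)]
      have hrest : (rest.filter (fun x => x < h)).length = 0 := by
        rw [List.length_eq_zero_iff, List.filter_eq_nil_iff]
        intro y hy
        have := hS.1 y hy
        simp only [decide_eq_true_eq]
        omega
      rw [List.length_cons] at hk
      have hcons : ((rest.filter (fun x => x < h))).length = 0 := hrest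
      rw [hcons]
      simp only [Nat.not_lt_zero, iff_false, not_lt]
      cases k with
      | zero => simpa using hx
      | succ k =>
        have hmem : rest.get ⟨k, by omega⟩ ∈ rest := List.get_mem _ _
        have := hS.1 _ hmem
        show h ≤ rest.get ⟨k, by omega⟩
        omega

lemma length_filter_sort (s : Finset ℕ) (h : ℕ) :
    ((s.sort (· ≤ ·)).filter (fun x => x < h)).length = (s.filter (fun x => x < h)).card := by
  rw [Finset.card_def, Finset.filter_val, ← Finset.sort_eq s (· ≤ ·),
      Multiset.filter_coe, Multiset.coe_card]

lemma part2_lemma (A B : List ℤ) (hA : List.Pairwise (· ≤ ·) A) (hB : List.Pairwise (· ≤ ·) B)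
    (hlen : B.length ≤ A.length) (hnc : NoCycles A B) {h : ℕ} (hh : IsHole A B h)
    {j : ℕ} (h1 : 1 ≤ j) (h2 : j ≤ B.length) :
    (Mpos A B j < h → ent B j ≤ ent A h) ∧ (h < Mpos A B j → ent A h ≤ ent B j) := by
  set d := B.length with hd
  set S := (matchedPos A B).sort (· ≤ ·) with hS
  have hSlen : S.length = d := by
    rw [hS, Finset.length_sort, matched_card A B hlen hnc]
  have hSsorted : S.Pairwise (· < ·) := (Finset.sortedLT_sort _).pairwise
  have hj1 : j - 1 < S.length := by omega
  have hMpos : Mpos A B j = S.get ⟨j - 1, hj1⟩ := by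
    rw [Mpos, ← hS, List.getD_eq_getElem _ _ hj1, List.get_eq_getElem]
  set t := ((matchedPos A B).filter (fun x => x < h)).card with ht
  have key1 : Mpos A B j < h ↔ j ≤ t := by
    rw [hMpos, sorted_get_lt hSsorted h (j-1) hj1, hS, length_filter_sort, ← ht]
    omega
  set J := (Finset.Icc 1 d).filter (fun j => ent B j < ent A h) with hJ
  have himage : (matchedPos A B).filter (fun x => x < h) = J.image (Spos A B) := by
    ext i
    simp only [hJ, Finset.mem_filter, Finset.mem_image, Finset.mem_Icc]
    constructor
    · rintro ⟨him, hilt⟩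
      obtain ⟨j', hj'1, hj'2, hj'3⟩ := (mem_usedPos A B d i).mp him
      rcases dichotomy A B hA hlen hnc hh hj'1 hj'2 with ⟨hb, _⟩ | ⟨_, hgt⟩
      · exact ⟨j', ⟨⟨hj'1, hj'2⟩, hb⟩, hj'3⟩
      · rw [hj'3] at hgt; omega
    · rintro ⟨j', ⟨⟨hj'1, hj'2⟩, hb⟩, rfl⟩
      rcases dichotomy A B hA hlen hnc hh hj'1 hj'2 with ⟨_, hlt⟩ | ⟨hge, _⟩
      · exact ⟨(mem_usedPos A B d _).mpr ⟨j', hj'1, hj'2, rfl⟩, hlt⟩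
      · exact absurd hge (by omega)
  have hcardJ : t = J.card := by
    rw [ht, himage, Finset.card_image_of_injOn]
    intro x hx y hy hxy
    simp only [Finset.mem_coe, hJ, Finset.mem_filter, Finset.mem_Icc] at hx hy
    by_contra hne
    rcases Nat.lt_or_ge x y with hl | hl
    · exact spos_inj A B hlen hnc hx.1.1 hl hy.1.2 hxy.symm
    · exact spos_inj A B hlen hnc hy.1.1 (by omega) hx.1.2 hxy
  have claim_a : ∀ k ∈ J, k ≤ t := by
    intro k hk
    simp only [hJ, Finset.mem_filter, Finset.mem_Icc] at hk
    have hsub : Finset.Icc 1 k ⊆ J := by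
      intro k' hk'
      simp only [Finset.mem_Icc] at hk'
      simp only [hJ, Finset.mem_filter, Finset.mem_Icc]
      have := ent_mono hB hk'.1 hk'.2 hk.1.2
      exact ⟨⟨hk'.1, by omega⟩, by omega⟩
    have := Finset.card_le_card hsub
    simp only [Nat.card_Icc] at this
    omega
  have claim_b : ∀ k, 1 ≤ k → k ≤ d → k ≤ t → k ∈ J := by
    intro k hk1 hk2 hk3
    by_contra hk
    have hsub : J ⊆ Finset.Icc 1 (k-1) := by
      intro k' hk'
      have hk'' := hk'
      simp only [hJ, Finset.mem_filter, Finset.mem_Icc] at hk''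
      simp only [Finset.mem_Icc]
      refine ⟨hk''.1.1, ?_⟩
      by_contra hge
      apply hk
      simp only [hJ, Finset.mem_filter, Finset.mem_Icc]
      have := ent_mono hB hk1 (by omega : k ≤ k') hk''.1.2
      exact ⟨⟨hk1, hk2⟩, by omega⟩
    have := Finset.card_le_card hsub
    simp only [Nat.card_Icc] at this
    omega
  constructor
  · intro hlt
    have hjt := key1.mp hlt
    have hmem := claim_b j h1 h2 hjt
    simp only [hJ, Finset.mem_filter] at hmem
    omega
  · intro hgt
    have hnt : ¬ j ≤ t := fun hc => by have := key1.mpr hc; omega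
    have hnJ : j ∉ J := fun hc => hnt (claim_a j hc)
    simp only [hJ, Finset.mem_filter, Finset.mem_Icc] at hnJ
    push_neg at hnJ
    have := hnJ ⟨h1, h2⟩
    omega

lemma sorted_getD_of_counts (L : List ℤ) (h : ℕ) (c : ℤ) (h1 : 1 ≤ h) (h2 : h ≤ L.length)
    (hle : h ≤ L.countP (fun x => decide (x ≤ c)))
    (hge : L.length - h + 1 ≤ L.countP (fun x => decide (c ≤ x))) :
    (List.insertionSort (· ≤ ·) L).getD (h-1) 0 = c := by
  set W := List.insertionSort (· ≤ ·) L with hW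
  have hperm : List.Perm W L := List.perm_insertionSort _ _
  have hsort : W.Pairwise (· ≤ ·) := List.pairwise_insertionSort _ _
  have hWlen : W.length = L.length := hperm.length_eq
  have hWh : h - 1 < W.length := by omega
  rw [List.getD_eq_getElem _ _ hWh]
  have hmono : ∀ (i j : ℕ) (hi : i < W.length) (hj : j < W.length), i ≤ j → W[i] ≤ W[j] := by
    intro i j hi hj hij
    have := hsort.rel_get_of_le (a := ⟨i, hi⟩) (b := ⟨j, hj⟩) (by simpa using hij)
    simpa [List.get_eq_getElem] using this
  have hcle : h ≤ W.countP (fun x => decide (x ≤ c)) := by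
    rwa [hperm.countP_eq]
  have hcge : L.length - h + 1 ≤ W.countP (fun x => decide (c ≤ x)) := by
    rwa [hperm.countP_eq]
  have hgle : W[h-1] ≤ c := by
    by_contra hc
    push_neg at hc
    have hsplit : W.countP (fun x => decide (x ≤ c)) =
        (W.take (h-1)).countP (fun x => decide (x ≤ c)) +
        (W.drop (h-1)).countP (fun x => decide (x ≤ c)) := by
      conv_lhs => rw [← List.take_append_drop (h-1) W]
      rw [List.countP_append]
    have hdrop : (W.drop (h-1)).countP (fun x => decide (x ≤ c)) = 0 := by
      rw [List.countP_eq_zero]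
      intro x hx
      rw [List.mem_iff_getElem] at hx
      obtain ⟨i, hi, rfl⟩ := hx
      rw [List.getElem_drop]
      have hlt : h - 1 + i < W.length := by
        rw [List.length_drop] at hi; omega
      have := hmono (h-1) (h-1+i) hWh hlt (by omega)
      simp only [decide_eq_true_eq]
      omega
    have htake := List.countP_le_length
      (p := fun x => decide (x ≤ c)) (l := W.take (h-1))
    rw [List.length_take] at htake
    omega
  have hgge : c ≤ W[h-1] := by
    by_contra hc
    push_neg at hc
    have hsplit : W.countP (fun x => decide (c ≤ x)) =
        (W.take h).countP (fun x => decide (c ≤ x)) +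
        (W.drop h).countP (fun x => decide (c ≤ x)) := by
      conv_lhs => rw [← List.take_append_drop h W]
      rw [List.countP_append]
    have htake : (W.take h).countP (fun x => decide (c ≤ x)) = 0 := by
      rw [List.countP_eq_zero]
      intro x hx
      rw [List.mem_iff_getElem] at hx
      obtain ⟨i, hi, rfl⟩ := hx
      rw [List.getElem_take]
      have hi' : i < h := by rw [List.length_take] at hi; omega
      have := hmono i (h-1) (by omega) hWh (by omega)
      simp only [decide_eq_true_eq]
      omega
    have hdrop := List.countP_le_length
      (p := fun x => decide (c ≤ x)) (l := W.drop h)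
    rw [List.length_drop] at hdrop
    omega
  omega

lemma part1_lemma (A B : List ℤ) (hA : List.Pairwise (· ≤ ·) A) (hB : List.Pairwise (· ≤ ·) B)
    (hlen : B.length ≤ A.length) (hnc : NoCycles A B) {h : ℕ} (hh : IsHole A B h) :
    ent (wcTop A B) h = ent A h := by
  have hhm := Finset.mem_Icc.mp hh.1
  have hhn := hh.2
  set c := ent A h with hc
  set f : ℕ → ℤ := fun t =>
    if (t + 1) ∈ matchedPos A B then
      ent B ((((matchedPos A B).sort (· ≤ ·)).idxOf (t + 1)) + 1)
    else ent A (t + 1) with hf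
  have hswap : swappedTop A B = (List.range A.length).map f := rfl
  have hbound : ∀ t : ℕ, t < A.length →
      (t + 1 ≤ h → f t ≤ c) ∧ (h ≤ t + 1 → c ≤ f t) := by
    intro t ht
    by_cases hmt : (t + 1) ∈ matchedPos A B
    · set S := (matchedPos A B).sort (· ≤ ·) with hS
      have hiS : (t + 1) ∈ S := (Finset.mem_sort _).mpr hmt
      have hidx : S.idxOf (t + 1) < S.length := List.idxOf_lt_length_iff.mpr hiS
      have hSlen : S.length = B.length := by
        rw [hS, Finset.length_sort, matched_card A B hlen hnc]
      have hr1 : 1 ≤ S.idxOf (t + 1) + 1 := by omega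
      have hr2 : S.idxOf (t + 1) + 1 ≤ B.length := by omega
      have hMr : Mpos A B (S.idxOf (t + 1) + 1) = t + 1 := by
        rw [Mpos, ← hS]
        simp only [Nat.add_sub_cancel]
        rw [List.getD_eq_getElem _ _ hidx]
        have := List.idxOf_get (l := S) hidx
        simpa [List.get_eq_getElem] using this
      have hpart2 := part2_lemma A B hA hB hlen hnc hh hr1 hr2
      have hfv : f t = ent B (S.idxOf (t + 1) + 1) := by
        simp only [hf]; rw [if_pos hmt, hS]
      have hne : t + 1 ≠ h := fun he => hhn (he ▸ hmt)
      constructor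
      · intro hth
        rw [hfv]
        exact hpart2.1 (by rw [hMr]; omega)
      · intro hth
        rw [hfv]
        exact hpart2.2 (by rw [hMr]; omega)
    · have hfv : f t = ent A (t + 1) := by rw [hf]; simp only [hmt, if_neg, ite_false]
      constructor
      · intro hth
        rw [hfv, hc]
        exact ent_mono hA (by omega) hth hhm.2
      · intro hth
        rw [hfv, hc]
        exact ent_mono hA hhm.1 hth (by omega)
  have hLlen : (swappedTop A B).length = A.length := by
    rw [hswap, List.length_map, List.length_range]
  have hcount_le : h ≤ (swappedTop A B).countP (fun x => decide (x ≤ c)) := by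
    have hsub : List.Sublist ((List.range h).map f) ((List.range A.length).map f) :=
      (List.range_sublist.mpr hhm.2).map f
    have hall : ((List.range h).map f).countP (fun x => decide (x ≤ c)) =
        ((List.range h).map f).length := by
      rw [List.countP_eq_length]
      intro x hx
      simp only [List.mem_map, List.mem_range] at hx
      obtain ⟨t, ht, rfl⟩ := hx
      simpa using (hbound t (by omega)).1 (by omega)
    have := hsub.countP_le (p := fun x => decide (x ≤ c))
    rw [hall] at this
    simpa [hswap] using this
  have hcount_ge : A.length - h + 1 ≤
      (swappedTop A B).countP (fun x => decide (c ≤ x)) := by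
    have hsub : List.Sublist (((List.range A.length).drop (h-1)).map f) ((List.range A.length).map f) :=
      (List.drop_sublist _ _).map f
    have hall : (((List.range A.length).drop (h-1)).map f).countP (fun x => decide (c ≤ x)) =
        (((List.range A.length).drop (h-1)).map f).length := by
      rw [List.countP_eq_length]
      intro x hx
      simp only [List.mem_map] at hx
      obtain ⟨t, ht, rfl⟩ := hx
      rw [List.mem_iff_getElem] at ht
      obtain ⟨i, hi, rfl⟩ := ht
      rw [List.getElem_drop] at *
      have hlen' : h - 1 + i < A.length := by
        rw [List.length_drop, List.length_range] at hi; omega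
      rw [List.getElem_range]
      simpa using (hbound (h-1+i) hlen').2 (by omega)
    have := hsub.countP_le (p := fun x => decide (c ≤ x))
    rw [hall, List.length_map, List.length_drop, List.length_range] at this
    have h2 : A.length - (h - 1) = A.length - h + 1 := by omega
    rw [h2] at this
    simpa [hswap] using this
  have := sorted_getD_of_counts (swappedTop A B) h c hhm.1 (by omega) hcount_le
    (by rw [hLlen]; exact hcount_ge)
  rw [ent, wcTop]
  exact this


/-- if no cycles occur, holes are fixed (in value and position) by
wall-crossing: the entry at a hole position `h` of the re-sorted top row equals
`a^h`; equivalently every `b^j` with `M(b^j)` strictly left (resp. right) of `h`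
satisfies `b^j ≤ a^h` (resp. `b^j ≥ a^h`). -/
theorem stmt2 (A B : List ℤ) (hA : List.Pairwise (· ≤ ·) A) (hB : List.Pairwise (· ≤ ·) B)
    (hlen : B.length ≤ A.length)
    (hnc : NoCycles A B) :
    ∀ h, IsHole A B h →
      ent (wcTop A B) h = ent A h ∧
      ∀ j, 1 ≤ j → j ≤ B.length →
        (Mpos A B j < h → ent B j ≤ ent A h) ∧ (h < Mpos A B j → ent A h ≤ ent B j) := by
  intro h hh
  exact ⟨part1_lemma A B hA hB hlen hnc hh,
    fun j h1 h2 => part2_lemma A B hA hB hlen hnc hh h1 h2⟩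
end

section
/- Let $a^1 \leq \cdots \leq a^m$ and $b^1 \leq \cdots \leq b^d$ be integers with $m \geq d$, and suppose the greedy swapping procedure produces no cycles and the hole positions are invariant under wall-crossing (statements $B$ and $D$). Let $h_1$ be the position of the first hole. Then $M(b^j) = a^j$ for all $j < h_1$, i.e. every bottom-row entry strictly left of the first hole is rematched (order-preservingly) with the top-row entry in the same position. -/
lemma pickPos_mem (A : List ℤ) (used : Finset ℕ) (x : ℤ)
    (h : ((Finset.Icc 1 A.length) \ used).Nonempty) :
    pickPos A used x ∈ (Finset.Icc 1 A.length) \ used := by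
  unfold pickPos
  set avail := (Finset.Icc 1 A.length) \ used with havail
  set cand := avail.filter (fun i => ent A i ≤ x) with hcand
  by_cases hc : cand.Nonempty
  · rw [if_pos hc]
    rw [(Finset.coe_max' hc).symm]
    simpa using Finset.mem_of_mem_filter _ (Finset.max'_mem cand hc)
  · rw [if_neg hc]
    rw [(Finset.coe_max' h).symm]
    simpa using Finset.max'_mem avail h

lemma usedPos_bound (A B : List ℤ) (hlen : B.length ≤ A.length) :
    ∀ k, k ≤ B.length →
      usedPos A B k ⊆ Finset.Icc 1 A.length ∧ (usedPos A B k).card ≤ k := by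
  intro k
  induction k with
  | zero => intro _; simp [usedPos]
  | succ n ih =>
    intro hk
    obtain ⟨hsub, hcard⟩ := ih (Nat.le_of_succ_le hk)
    have hne : ((Finset.Icc 1 A.length) \ usedPos A B n).Nonempty := by
      rw [← Finset.card_pos]
      have h1 := Finset.le_card_sdiff (usedPos A B n) (Finset.Icc 1 A.length)
      rw [Nat.card_Icc] at h1
      omega
    have hp := pickPos_mem A (usedPos A B n) (ent B (n + 1)) hne
    rw [Finset.mem_sdiff] at hp
    constructor
    · intro y hy
      rw [usedPos, Finset.mem_insert] at hy
      rcases hy with rfl | hy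
      · exact hp.1
      · exact hsub hy
    · calc (usedPos A B (n+1)).card ≤ (usedPos A B n).card + 1 :=
            Finset.card_insert_le _ _
        _ ≤ n + 1 := by omega

lemma matchedPos_subset (A B : List ℤ) (hlen : B.length ≤ A.length) :
    matchedPos A B ⊆ Finset.Icc 1 A.length :=
  (usedPos_bound A B hlen B.length le_rfl).1

/-- assuming no cycles and invariance of holes under wall-crossing,
every bottom entry strictly left of the first hole `h₁` is rematched with the
top entry in the same position: `M(b^j) = a^j` for `j < h₁`. -/
theorem stmt7 (A B : List ℤ) (hA : List.Pairwise (· ≤ ·) A) (hB : List.Pairwise (· ≤ ·) B)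
    (hlen : B.length ≤ A.length)
    (hdom : ∀ j, 1 ≤ j → j ≤ B.length → ent A j ≤ ent B j)
    (hnc : NoCycles A B)
    (hholes : ∀ h, IsHole A B h → ent (wcTop A B) h = ent A h)
    (h1 : ℕ) (hh1 : IsHole A B h1)
    (hmin : ∀ i, 1 ≤ i → i < h1 → i ∈ matchedPos A B) :
    ∀ j, 1 ≤ j → j < h1 → Mpos A B j = j := by
  classical
  have hsub : matchedPos A B ⊆ Finset.Icc 1 A.length := matchedPos_subset A B hlen
  have h0 : (0:ℕ) ∉ matchedPos A B := fun h => by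
    simpa using (Finset.mem_Icc.1 (hsub h)).1
  set S := matchedPos A B with hSdef
  set L := S.sort (· ≤ ·) with hLdef
  have hmemL : ∀ x, x ∈ L ↔ x ∈ S := fun x => Finset.mem_sort _
  have hsort : L.SortedLT := Finset.sortedLT_sort S
  have hmono : StrictMono L.get := hsort.strictMono_get
  intro j
  induction j using Nat.strong_induction_on with
  | _ j IH =>
    intro hj1 hjh
    have hjS : j ∈ S := hmin j hj1 hjh
    have hcard : j ≤ L.length := by
      rw [hLdef, Finset.length_sort]
      have hss : Finset.Icc 1 j ⊆ S := by
        intro i hi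
        rcases Finset.mem_Icc.1 hi with ⟨h1i, hij⟩
        exact hmin i h1i (lt_of_le_of_lt hij hjh)
      have := Finset.card_le_card hss
      simpa using this
    obtain ⟨i, hi⟩ := List.mem_iff_get.1 ((hmemL j).2 hjS)
    have hieq : (i : ℕ) = j - 1 := by
      rcases lt_trichotomy (i : ℕ) (j - 1) with hlt | heq | hgt
      · -- i < j - 1: contradiction with IH at k = i+1
        exfalso
        have hk1 : (1:ℕ) ≤ (i:ℕ) + 1 := by omega
        have hkj : (i:ℕ) + 1 < j := by omega
        have hIH := IH ((i:ℕ) + 1) hkj hk1 (lt_trans hkj hjh)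
        have : Mpos A B ((i:ℕ) + 1) = L.getD (i:ℕ) 0 := by
          simp [Mpos, hLdef, hSdef]
        rw [this, List.getD_eq_get (i := ⟨i, i.isLt⟩)] at hIH
        simp only [Fin.eta] at hIH
        omega
      · exact heq
      · -- i > j - 1
        exfalso
        have hj1lt : j - 1 < L.length := lt_of_le_of_lt (by omega) i.isLt
        have hlt : L.get ⟨j - 1, hj1lt⟩ < j := by
          have := hmono (show (⟨j - 1, hj1lt⟩ : Fin L.length) < i by
            exact Fin.mk_lt_of_lt_val hgt)
          omega
        rcases Nat.eq_or_lt_of_le hj1 with hje | hj2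
        · -- j = 1, so L.get 0 = 0 ∈ S, contradiction
          have hmem : L.get ⟨j - 1, hj1lt⟩ ∈ S := (hmemL _).1 (L.get_mem _)
          have : L.get ⟨j - 1, hj1lt⟩ = 0 := by omega
          rw [this] at hmem
          exact h0 hmem
        · -- j ≥ 2: IH at k = j - 1
          have hIH := IH (j - 1) (by omega) (by omega) (by omega)
          have heq2 : Mpos A B (j - 1) = L.getD (j - 2) 0 := by
            have : j - 1 - 1 = j - 2 := by omega
            simp [Mpos, hLdef, hSdef, this]
          have hj2lt : j - 2 < L.length := by omega
          rw [heq2, List.getD_eq_get (i := ⟨j - 2, hj2lt⟩)] at hIH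
          have := hmono (show (⟨j - 2, hj2lt⟩ : Fin L.length) < ⟨j - 1, hj1lt⟩ by
            exact Fin.mk_lt_mk.2 (by omega))
          omega
    have hj1lt : j - 1 < L.length := by omega
    have : Mpos A B j = L.getD (j - 1) 0 := by simp [Mpos, hLdef, hSdef]
    rw [this, List.getD_eq_get (i := ⟨j - 1, hj1lt⟩)]
    have : i = (⟨j - 1, hj1lt⟩ : Fin L.length) := Fin.ext hieq
    rw [← this, hi]
end
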